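/- arXiv:1205.6757 — 2 statements merged into one kernel-verified Lean document; each statement's English description precedes it below -/
import Mathlib

section
/- Let X be a finite set of distinct points in ℙ¹×ℙ¹ over k. Then X satisfies property (*) if and only if for every point P ∈ X the set deg_X(P) consists of exactly one element. -/
/-- `ℙ¹` over `k`, as the projectivization of `k²`. -/
abbrev Proj1 (k : Type*) [Field k] := Projectivization k (Fin 2 → k)

/-- The bigraded coordinate ring `R = k[x₀,x₁,y₀,y₁]` of `ℙ¹ × ℙ¹`,
with the `x` variables indexed by `Sum.inl` and the `y` variables by `Sum.inr`. -/
abbrev BiPoly (k : Type*) [Field k] := MvPolynomial (Fin 2 ⊕ Fin 2) k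

variable {k : Type*} [Field k]

/-- `F` is bihomogeneous of bidegree `d = (d₁, d₂)`: every monomial of `F` has total degree
`d₁` in `x₀,x₁` and total degree `d₂` in `y₀,y₁`. -/
def IsBihomogeneous (F : BiPoly k) (d : ℕ × ℕ) : Prop :=
  ∀ m ∈ F.support,
    (∑ i : Fin 2, m (Sum.inl i)) = d.1 ∧ (∑ i : Fin 2, m (Sum.inr i)) = d.2

/-- `F` vanishes at the point `P` of `ℙ¹ × ℙ¹`, i.e. at every pair of representatives. -/
def VanishesAt (F : BiPoly k) (P : Proj1 k × Proj1 k) : Prop :=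
  ∀ (p q : Fin 2 → k) (hp : p ≠ 0) (hq : q ≠ 0),
    Projectivization.mk k p hp = P.1 → Projectivization.mk k q hq = P.2 →
    MvPolynomial.eval (Sum.elim p q) F = 0

/-- `F` is a separator of `P` in `X` of bidegree `d`: it is bihomogeneous of bidegree `d`,
does not vanish at `P`, and vanishes at every other point of `X`. -/
def IsSeparator (X : Finset (Proj1 k × Proj1 k)) (P : Proj1 k × Proj1 k)
    (F : BiPoly k) (d : ℕ × ℕ) : Prop :=
  IsBihomogeneous F d ∧ ¬ VanishesAt F P ∧ ∀ Q ∈ X, Q ≠ P → VanishesAt F Q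

/-- The set of bidegrees of separators of `P` in `X`. -/
def sepDegrees (X : Finset (Proj1 k × Proj1 k)) (P : Proj1 k × Proj1 k) : Set (ℕ × ℕ) :=
  {d | ∃ F : BiPoly k, IsSeparator X P F d}

/-- `deg_X(P)`: the set of minimal elements, with respect to the componentwise partial
order on `ℕ × ℕ`, of the set of bidegrees of separators of `P` in `X`. -/
def degSet (X : Finset (Proj1 k × Proj1 k)) (P : Proj1 k × Proj1 k) : Set (ℕ × ℕ) :=
  {d | d ∈ sepDegrees X P ∧ ∀ e ∈ sepDegrees X P, e ≤ d → e = d}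

/-- The ideal `I_X` of all polynomials vanishing at (every representative of)
every point of `X`. -/
noncomputable def vanishingIdeal (X : Finset (Proj1 k × Proj1 k)) : Ideal (BiPoly k) where
  carrier := {F | ∀ P ∈ X, VanishesAt F P}
  zero_mem' := by
    intro P _ p q hp hq _ _
    simp
  add_mem' := by
    intro F G hF hG P hP p q hp hq h1 h2
    have h := hF P hP p q hp hq h1 h2
    have h' := hG P hP p q hp hq h1 h2
    simp [h, h']
  smul_mem' := by
    intro c F hF P hP p q hp hq h1 h2
    have h := hF P hP p q hp hq h1 h2
    simp [smul_eq_mul, h]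

/-- Property (*): whenever `P×Q, P'×Q' ∈ X` with `P ≠ P'` and `Q ≠ Q'`, at least one of
`P×Q'` and `P'×Q` is in `X`. -/
def PropertyStar (X : Finset (Proj1 k × Proj1 k)) : Prop :=
  ∀ P Q P' Q' : Proj1 k, (P, Q) ∈ X → (P', Q') ∈ X → P ≠ P' → Q ≠ Q' →
    (P, Q') ∈ X ∨ (P', Q) ∈ X

/-- The depth of a commutative ring `A` with respect to an ideal `m`: the supremum of the
lengths of regular sequences on `A` consisting of elements of `m`. -/
noncomputable def depthWrt (A : Type*) [CommRing A] (m : Ideal A) : ℕ :=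
  sSup {n | ∃ rs : List A, rs.length = n ∧ (∀ r ∈ rs, r ∈ m) ∧
    RingTheory.Sequence.IsRegular A rs}

/-- The irrelevant maximal ideal `(x₀,x₁,y₀,y₁)` of `R/I_X`. -/
noncomputable def irrelevantIdeal (X : Finset (Proj1 k × Proj1 k)) :
    Ideal (BiPoly k ⧸ vanishingIdeal X) :=
  (Ideal.span (Set.range (MvPolynomial.X : (Fin 2 ⊕ Fin 2) → BiPoly k))).map
    (Ideal.Quotient.mk (vanishingIdeal X))

/-- `X` is arithmetically Cohen–Macaulay: `depth (R/I_X) = 2`. -/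
def IsACM (X : Finset (Proj1 k × Proj1 k)) : Prop :=
  depthWrt (BiPoly k ⧸ vanishingIdeal X) (irrelevantIdeal X) = 2

open Classical in
/-- The number of points of `X` with first coordinate `P` (the cardinality of `X_{P,1}`). -/
noncomputable def fiber1Card (X : Finset (Proj1 k × Proj1 k)) (P : Proj1 k) : ℕ :=
  (X.filter fun T => T.1 = P).card

open Classical in
/-- The number of points of `X` with second coordinate `Q` (the cardinality of `X_{Q,2}`). -/
noncomputable def fiber2Card (X : Finset (Proj1 k × Proj1 k)) (Q : Proj1 k) : ℕ :=
  (X.filter fun T => T.2 = Q).card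

open Classical in
/-- The number of distinct first coordinates of points of `X`, i.e. `|π₁(X)|`. -/
noncomputable def proj1Card (X : Finset (Proj1 k × Proj1 k)) : ℕ :=
  (X.image Prod.fst).card

open Classical in
/-- The number of distinct second coordinates of points of `X`, i.e. `|π₂(X)|`. -/
noncomputable def proj2Card (X : Finset (Proj1 k × Proj1 k)) : ℕ :=
  (X.image Prod.snd).card
section Aux
open MvPolynomial Polynomial Projectivization

variable {k : Type*} [Field k]

/-- Scaling: evaluation of a bihomogeneous polynomial at scaled representatives. -/
lemma eval_smul_smul {F : BiPoly k} {d : ℕ × ℕ} (hF : IsBihomogeneous F d)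
    (p q : Fin 2 → k) (c e : k) :
    MvPolynomial.eval (Sum.elim (c • p) (e • q)) F
      = c ^ d.1 * e ^ d.2 * MvPolynomial.eval (Sum.elim p q) F := by
  rw [MvPolynomial.eval_eq', MvPolynomial.eval_eq', Finset.mul_sum]
  refine Finset.sum_congr rfl fun m hm => ?_
  obtain ⟨h1, h2⟩ := hF m hm
  rw [Fintype.prod_sum_type, Fintype.prod_sum_type]
  have hl : (∏ i : Fin 2, Sum.elim (c • p) (e • q) (Sum.inl i) ^ m (Sum.inl i))
      = c ^ d.1 * ∏ i : Fin 2, p i ^ m (Sum.inl i) := by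
    simp only [Sum.elim_inl, Pi.smul_apply, smul_eq_mul, mul_pow]
    rw [Finset.prod_mul_distrib, Finset.prod_pow_eq_pow_sum, h1]
  have hr : (∏ i : Fin 2, Sum.elim (c • p) (e • q) (Sum.inr i) ^ m (Sum.inr i))
      = e ^ d.2 * ∏ i : Fin 2, q i ^ m (Sum.inr i) := by
    simp only [Sum.elim_inr, Pi.smul_apply, smul_eq_mul, mul_pow]
    rw [Finset.prod_mul_distrib, Finset.prod_pow_eq_pow_sum, h2]
  rw [hl, hr]
  simp only [Sum.elim_inl, Sum.elim_inr]
  ring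

/-- If a bihomogeneous `F` vanishes at the canonical representatives, it vanishes at all. -/
lemma vanishesAt_of_eval_rep_eq_zero {F : BiPoly k} {d : ℕ × ℕ} (hF : IsBihomogeneous F d)
    (P : Proj1 k × Proj1 k)
    (h : MvPolynomial.eval (Sum.elim P.1.rep P.2.rep) F = 0) : VanishesAt F P := by
  intro p q hp hq h1 h2
  have e1 : Projectivization.mk k p hp = Projectivization.mk k P.1.rep P.1.rep_nonzero := by
    rw [h1, Projectivization.mk_rep]
  have e2 : Projectivization.mk k q hq = Projectivization.mk k P.2.rep P.2.rep_nonzero := by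
    rw [h2, Projectivization.mk_rep]
  obtain ⟨c, hc⟩ := (Projectivization.mk_eq_mk_iff k _ _ _ _).mp e1
  obtain ⟨e, he⟩ := (Projectivization.mk_eq_mk_iff k _ _ _ _).mp e2
  rw [← hc, ← he]
  have := eval_smul_smul hF P.1.rep P.2.rep (c : k) (e : k)
  simp only [Units.smul_def] at this ⊢
  rw [this, h, mul_zero]

lemma not_vanishesAt_iff {F : BiPoly k} {d : ℕ × ℕ} (hF : IsBihomogeneous F d)
    (P : Proj1 k × Proj1 k) :
    ¬ VanishesAt F P ↔ MvPolynomial.eval (Sum.elim P.1.rep P.2.rep) F ≠ 0 := by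
  constructor
  · intro h hne
    exact h (vanishesAt_of_eval_rep_eq_zero hF P hne)
  · intro hne h
    exact hne (h P.1.rep P.2.rep P.1.rep_nonzero P.2.rep_nonzero
      (Projectivization.mk_rep _) (Projectivization.mk_rep _))

/-- Determinant criterion for equality in `ℙ¹`. -/
lemma det_eq_zero_iff_mk_eq (a p : Fin 2 → k) (ha : a ≠ 0) (hp : p ≠ 0) :
    a 1 * p 0 - a 0 * p 1 = 0 ↔
      Projectivization.mk k p hp = Projectivization.mk k a ha := by
  rw [Projectivization.mk_eq_mk_iff]
  constructor
  · intro h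
    by_cases h0 : a 0 = 0
    · have ha1 : a 1 ≠ 0 := by
        intro h1; apply ha; funext i; fin_cases i <;> simp [h0, h1]
      have hp0 : p 0 = 0 := by
        have := h; rw [h0] at this; simp at this
        rcases this with h' | h'
        · exact absurd h' ha1
        · exact h'
      have hp1 : p 1 ≠ 0 := by
        intro h1; apply hp; funext i; fin_cases i <;> simp [hp0, h1]
      refine ⟨Units.mk0 (p 1 / a 1) (div_ne_zero hp1 ha1), ?_⟩
      funext i; fin_cases i <;>
        simp [Units.smul_def, h0, hp0, div_mul_cancel₀, ha1]
    · have hp0 : p 0 ≠ 0 := by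
        intro h1
        rw [h1] at h; simp at h
        rcases h with h' | h'
        · exact h0 h'
        · apply hp; funext i; fin_cases i <;> simpa [h1]
      refine ⟨Units.mk0 (p 0 / a 0) (div_ne_zero hp0 h0), ?_⟩
      funext i; fin_cases i
      · simp [Units.smul_def, div_mul_cancel₀, h0]
      · simp only [Units.smul_def, Units.val_mk0, Pi.smul_apply, smul_eq_mul, Fin.mk_one]
        field_simp
        linear_combination h
  · rintro ⟨c, hc⟩
    rw [← hc]
    simp only [Units.smul_def, Pi.smul_apply, smul_eq_mul]
    ring

end Aux
section Aux2
open MvPolynomial Polynomial Projectivization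

variable {k : Type*} [Field k]

/-- The weight function realizing bihomogeneity. -/
def biWeight : (Fin 2 ⊕ Fin 2) → ℕ × ℕ := Sum.elim (fun _ => (1, 0)) (fun _ => (0, 1))

lemma weight_biWeight (m : (Fin 2 ⊕ Fin 2) →₀ ℕ) :
    (Finsupp.weight biWeight) m = (∑ i : Fin 2, m (Sum.inl i), ∑ i : Fin 2, m (Sum.inr i)) := by
  rw [Finsupp.weight_apply, Finsupp.sum_fintype _ _ (fun i => by simp)]
  rw [Fintype.sum_sum_type]
  apply Prod.ext <;>
    simp [biWeight, Prod.fst_sum, Prod.snd_sum, Prod.smul_mk, smul_eq_mul]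

lemma isBihomogeneous_iff_weighted {F : BiPoly k} {d : ℕ × ℕ} :
    IsBihomogeneous F d ↔ IsWeightedHomogeneous biWeight F d := by
  constructor
  · intro h m hm
    rw [weight_biWeight]
    obtain ⟨h1, h2⟩ := h m (mem_support_iff.mpr hm)
    rw [h1, h2]
  · intro h m hm
    have := h (mem_support_iff.mp hm)
    rw [weight_biWeight] at this
    exact ⟨congrArg Prod.fst this, congrArg Prod.snd this⟩

/-- The horizontal linear form vanishing exactly on the line `{A} × ℙ¹`. -/
noncomputable def Hform (A : Proj1 k) : BiPoly k :=
  MvPolynomial.C (A.rep 1) * MvPolynomial.X (Sum.inl 0)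
    + MvPolynomial.C (- A.rep 0) * MvPolynomial.X (Sum.inl 1)

/-- The vertical linear form vanishing exactly on the line `ℙ¹ × {B}`. -/
noncomputable def Vform (B : Proj1 k) : BiPoly k :=
  MvPolynomial.C (B.rep 1) * MvPolynomial.X (Sum.inr 0)
    + MvPolynomial.C (- B.rep 0) * MvPolynomial.X (Sum.inr 1)

lemma Hform_isBihomogeneous (A : Proj1 k) : IsBihomogeneous (Hform A) ((1 : ℕ), (0 : ℕ)) := by
  rw [isBihomogeneous_iff_weighted]
  have h0 : ((1, 0) : ℕ × ℕ) = 0 + biWeight (Sum.inl 0) := by simp [biWeight]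
  rw [h0]
  exact ((isWeightedHomogeneous_C biWeight _).mul (isWeightedHomogeneous_X k _ _)).add
    (by simpa [biWeight] using
      ((isWeightedHomogeneous_C biWeight (- A.rep 0)).mul
        (isWeightedHomogeneous_X k biWeight (Sum.inl 1))))

lemma Vform_isBihomogeneous (B : Proj1 k) : IsBihomogeneous (Vform B) ((0 : ℕ), (1 : ℕ)) := by
  rw [isBihomogeneous_iff_weighted]
  have h0 : ((0, 1) : ℕ × ℕ) = 0 + biWeight (Sum.inr 0) := by simp [biWeight]
  rw [h0]
  exact ((isWeightedHomogeneous_C biWeight _).mul (isWeightedHomogeneous_X k _ _)).add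
    (by simpa [biWeight] using
      ((isWeightedHomogeneous_C biWeight (- B.rep 0)).mul
        (isWeightedHomogeneous_X k biWeight (Sum.inr 1))))

lemma eval_Hform (A : Proj1 k) (p q : Fin 2 → k) :
    MvPolynomial.eval (Sum.elim p q) (Hform A) = A.rep 1 * p 0 - A.rep 0 * p 1 := by
  simp [Hform]; ring

lemma eval_Vform (B : Proj1 k) (p q : Fin 2 → k) :
    MvPolynomial.eval (Sum.elim p q) (Vform B) = B.rep 1 * q 0 - B.rep 0 * q 1 := by
  simp [Vform]; ring

lemma eval_Hform_eq_zero_iff (A : Proj1 k) (p q : Fin 2 → k) (hp : p ≠ 0) :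
    MvPolynomial.eval (Sum.elim p q) (Hform A) = 0 ↔ Projectivization.mk k p hp = A := by
  rw [eval_Hform, det_eq_zero_iff_mk_eq A.rep p A.rep_nonzero hp]
  rw [Projectivization.mk_rep]

lemma eval_Vform_eq_zero_iff (B : Proj1 k) (p q : Fin 2 → k) (hq : q ≠ 0) :
    MvPolynomial.eval (Sum.elim p q) (Vform B) = 0 ↔ Projectivization.mk k q hq = B := by
  rw [eval_Vform, det_eq_zero_iff_mk_eq B.rep q B.rep_nonzero hq]
  rw [Projectivization.mk_rep]

end Aux2
section Aux3
open MvPolynomial Polynomial Projectivization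

variable {k : Type*} [Field k]

/-- Restriction of `F` to the line `x = a`, as a univariate polynomial in the chart `y = (t,1)`. -/
noncomputable def restrictY (F : BiPoly k) (a : Fin 2 → k) : Polynomial k :=
  MvPolynomial.eval₂ (Polynomial.C)
    (Sum.elim (fun i => Polynomial.C (a i)) ![Polynomial.X, 1]) F

lemma eval_restrictY (F : BiPoly k) (a : Fin 2 → k) (t : k) :
    (restrictY F a).eval t = MvPolynomial.eval (Sum.elim a ![t, 1]) F := by
  have h := MvPolynomial.eval₂_comp_left (Polynomial.evalRingHom t) (Polynomial.C)
    (Sum.elim (fun i => Polynomial.C (a i)) ![Polynomial.X, 1]) F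
  have hc : (Polynomial.evalRingHom t).comp (Polynomial.C : k →+* Polynomial k)
      = RingHom.id k := by
    ext x; simp
  rw [restrictY]
  show (Polynomial.evalRingHom t) _ = _
  rw [h, hc]
  have : (⇑(Polynomial.evalRingHom t) ∘
      (Sum.elim (fun i => Polynomial.C (a i)) ![Polynomial.X, 1])) = Sum.elim a ![t, 1] := by
    funext i
    rcases i with i | j
    · simp
    · fin_cases j <;> simp
  rw [this]
  rfl

end Aux3

section Aux3b
open MvPolynomial Polynomial Projectivization

variable {k : Type*} [Field k]

lemma restrictY_eq_sum (F : BiPoly k) (a : Fin 2 → k) :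
    restrictY F a = ∑ m ∈ F.support,
      Polynomial.C (MvPolynomial.coeff m F) * Polynomial.C (a 0 ^ m (Sum.inl 0) * a 1 ^ m (Sum.inl 1))
        * Polynomial.X ^ m (Sum.inr 0) := by
  rw [restrictY, MvPolynomial.eval₂_eq']
  refine Finset.sum_congr rfl fun m _ => ?_
  rw [Fintype.prod_sum_type, Fin.prod_univ_two, Fin.prod_univ_two]
  simp only [Sum.elim_inl, Sum.elim_inr, Matrix.cons_val_zero, Matrix.cons_val_one,
    Matrix.head_cons, one_pow, mul_one, ← Polynomial.C_pow]
  simp [Polynomial.C_mul, mul_assoc]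

lemma natDegree_restrictY_le {F : BiPoly k} {d : ℕ × ℕ} (hF : IsBihomogeneous F d)
    (a : Fin 2 → k) : (restrictY F a).natDegree ≤ d.2 := by
  rw [restrictY_eq_sum]
  refine Polynomial.natDegree_sum_le_of_forall_le _ _ fun m hm => ?_
  rw [mul_assoc]
  refine (Polynomial.natDegree_C_mul_le _ _).trans ?_
  refine (Polynomial.natDegree_C_mul_le _ _).trans ?_
  rw [Polynomial.natDegree_X_pow]
  have h2 := (hF m hm).2
  rw [Fin.sum_univ_two] at h2
  omega

lemma coeff_restrictY_top {F : BiPoly k} {d : ℕ × ℕ} (hF : IsBihomogeneous F d)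
    (a : Fin 2 → k) :
    (restrictY F a).coeff d.2 = MvPolynomial.eval (Sum.elim a ![(1 : k), 0]) F := by
  rw [restrictY_eq_sum, Polynomial.finset_sum_coeff, MvPolynomial.eval_eq']
  refine Finset.sum_congr rfl fun m hm => ?_
  rw [Fintype.prod_sum_type, Fin.prod_univ_two, Fin.prod_univ_two]
  simp only [Sum.elim_inl, Sum.elim_inr, Matrix.cons_val_zero, Matrix.cons_val_one,
    Matrix.head_cons, mul_assoc, Polynomial.coeff_C_mul, Polynomial.coeff_X_pow, one_pow, one_mul]
  have h2 := (hF m hm).2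
  rw [Fin.sum_univ_two] at h2
  by_cases h : m (Sum.inr 1) = 0
  · have : m (Sum.inr 0) = d.2 := by omega
    rw [h, this, pow_zero, if_pos rfl]
  · rw [zero_pow h, if_neg (by omega)]

end Aux3b
section Aux4
open MvPolynomial Polynomial Projectivization

variable {k : Type*} [Field k]

lemma one_zero_ne_zero : (![1, 0] : Fin 2 → k) ≠ 0 := by
  intro h
  have := congrFun h 0
  simp at this

lemma vec_t1_ne_zero (t : k) : (![t, 1] : Fin 2 → k) ≠ 0 := by
  intro h
  have := congrFun h 1
  simp at this

/-- The point at infinity `(1:0)` of `ℙ¹`. -/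
noncomputable def infPt (k : Type*) [Field k] : Proj1 k :=
  Projectivization.mk k ![1, 0] one_zero_ne_zero

lemma eval_smul_right {F : BiPoly k} {d : ℕ × ℕ} (hF : IsBihomogeneous F d)
    (p q : Fin 2 → k) (c : k) :
    MvPolynomial.eval (Sum.elim p (c • q)) F = c ^ d.2 * MvPolynomial.eval (Sum.elim p q) F := by
  have := eval_smul_smul hF p q 1 c
  simpa using this

lemma eval_smul_left {F : BiPoly k} {d : ℕ × ℕ} (hF : IsBihomogeneous F d)
    (p q : Fin 2 → k) (c : k) :
    MvPolynomial.eval (Sum.elim (c • p) q) F = c ^ d.1 * MvPolynomial.eval (Sum.elim p q) F := by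
  have := eval_smul_smul hF p q c 1
  simpa using this

lemma rep_one_ne_zero {B : Proj1 k} (h : B ≠ infPt k) : B.rep 1 ≠ 0 := by
  intro h1
  apply h
  have h0 : B.rep 0 ≠ 0 := by
    intro h0
    exact B.rep_nonzero (by funext i; fin_cases i <;> simp [h0, h1])
  have : Projectivization.mk k B.rep B.rep_nonzero
      = Projectivization.mk k ![1, 0] one_zero_ne_zero := by
    rw [Projectivization.mk_eq_mk_iff]
    refine ⟨Units.mk0 (B.rep 0) h0, ?_⟩
    funext i; fin_cases i <;> simp [Units.smul_def, h1]
  rw [← Projectivization.mk_rep B]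
  exact this

lemma chart_eq {b : Fin 2 → k} (hb1 : b 1 ≠ 0) :
    (![b 0 / b 1, 1] : Fin 2 → k) = (b 1)⁻¹ • b := by
  funext i; fin_cases i
  · simp [div_eq_inv_mul]
  · simp [inv_mul_cancel₀ hb1]

lemma mk_chart {B : Proj1 k} (h : B ≠ infPt k) :
    Projectivization.mk k ![B.rep 0 / B.rep 1, 1] (vec_t1_ne_zero _) = B := by
  have hb1 := rep_one_ne_zero h
  conv_rhs => rw [← Projectivization.mk_rep B]
  rw [Projectivization.mk_eq_mk_iff]
  refine ⟨Units.mk0 (B.rep 1)⁻¹ (inv_ne_zero hb1), ?_⟩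
  rw [Units.smul_def, Units.val_mk0]
  exact (chart_eq hb1).symm

lemma card_le_natDegree_of_roots {φ : Polynomial k} (hφ : φ ≠ 0) (T : Finset (Proj1 k))
    (hT : ∀ B ∈ T, B ≠ infPt k)
    (hroot : ∀ B ∈ T, φ.eval (B.rep 0 / B.rep 1) = 0) : T.card ≤ φ.natDegree := by
  classical
  set ρ : Proj1 k → k := fun B => B.rep 0 / B.rep 1 with hρ
  have hinj : Set.InjOn ρ T := by
    intro B hB B' hB' he
    rw [← mk_chart (hT B hB), ← mk_chart (hT B' hB')]
    have : (![ρ B, 1] : Fin 2 → k) = ![ρ B', 1] := by rw [he]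
    congr 1
  have hsub : T.image ρ ⊆ φ.roots.toFinset := by
    intro t ht
    obtain ⟨B, hB, rfl⟩ := Finset.mem_image.mp ht
    rw [Multiset.mem_toFinset, Polynomial.mem_roots']
    exact ⟨hφ, hroot B hB⟩
  calc T.card = (T.image ρ).card := (Finset.card_image_of_injOn hinj).symm
    _ ≤ φ.roots.toFinset.card := Finset.card_le_card hsub
    _ ≤ Multiset.card φ.roots := Multiset.toFinset_card_le _
    _ ≤ φ.natDegree := Polynomial.card_roots' φ

/-- KEY: a bihomogeneous `F` of bidegree `d`, not vanishing at `(a, B₀)`, vanishes at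
`(a, B)` for at most `d.2` many points `B ≠ B₀`. -/
lemma key_y {F : BiPoly k} {d : ℕ × ℕ} (hF : IsBihomogeneous F d) (a : Fin 2 → k)
    (S : Finset (Proj1 k)) (hS : ∀ B ∈ S, MvPolynomial.eval (Sum.elim a B.rep) F = 0)
    (B₀ : Proj1 k) (hB₀ : B₀ ∉ S)
    (hnz : MvPolynomial.eval (Sum.elim a B₀.rep) F ≠ 0) :
    S.card ≤ d.2 := by
  classical
  set φ := restrictY F a with hφdef
  have hdeg : φ.natDegree ≤ d.2 := natDegree_restrictY_le hF a
  have chart_eval : ∀ B : Proj1 k, B ≠ infPt k →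
      φ.eval (B.rep 0 / B.rep 1)
        = ((B.rep 1)⁻¹) ^ d.2 * MvPolynomial.eval (Sum.elim a B.rep) F := by
    intro B hB
    rw [hφdef, eval_restrictY, chart_eq (rep_one_ne_zero hB), eval_smul_right hF]
  have coeff_inf : φ.coeff d.2 = MvPolynomial.eval (Sum.elim a ![(1:k), 0]) F :=
    coeff_restrictY_top hF a
  -- eval at infinity representative vs rep of infPt
  obtain ⟨c, hc⟩ := (Projectivization.mk_eq_mk_iff k _ _
      (infPt k).rep_nonzero one_zero_ne_zero).mp (by rw [Projectivization.mk_rep]; rfl)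
  have inf_eval : MvPolynomial.eval (Sum.elim a (infPt k).rep) F
      = (c : k) ^ d.2 * MvPolynomial.eval (Sum.elim a ![(1:k), 0]) F := by
    rw [← hc, Units.smul_def, eval_smul_right hF]
  by_cases h0 : B₀ = infPt k
  · -- φ has nonzero top coefficient, all points of S are affine
    have htop : φ.coeff d.2 ≠ 0 := by
      rw [coeff_inf]
      intro hz
      apply hnz
      rw [h0, inf_eval, hz, mul_zero]
    have hφne : φ ≠ 0 := fun h => htop (by rw [h]; simp)
    have hTne : ∀ B ∈ S, B ≠ infPt k := fun B hB he => hB₀ (by rwa [h0, ← he])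
    have : S.card ≤ φ.natDegree := by
      refine card_le_natDegree_of_roots hφne S hTne fun B hB => ?_
      rw [chart_eval B (hTne B hB), hS B hB, mul_zero]
    omega
  · have hφt : φ.eval (B₀.rep 0 / B₀.rep 1) ≠ 0 := by
      rw [chart_eval B₀ h0]
      exact mul_ne_zero (pow_ne_zero _ (inv_ne_zero (rep_one_ne_zero h0))) hnz
    have hφne : φ ≠ 0 := fun h => hφt (by rw [h]; simp)
    by_cases hinf : infPt k ∈ S
    · have hz : MvPolynomial.eval (Sum.elim a ![(1:k), 0]) F = 0 := by
        have := hS _ hinf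
        rw [inf_eval] at this
        exact (mul_eq_zero.mp this).resolve_left (pow_ne_zero _ c.ne_zero)
      have htop0 : φ.coeff d.2 = 0 := by rw [coeff_inf, hz]
      have hdlt : φ.natDegree < d.2 := by
        rcases lt_or_eq_of_le hdeg with h | h
        · exact h
        · exfalso
          apply hφne
          rw [← Polynomial.leadingCoeff_eq_zero, Polynomial.leadingCoeff, h, htop0]
      have hcard : (S.erase (infPt k)).card ≤ φ.natDegree := by
        refine card_le_natDegree_of_roots hφne _ (fun B hB => Finset.ne_of_mem_erase hB)
          fun B hB => ?_
        rw [chart_eval B (Finset.ne_of_mem_erase hB), hS B (Finset.mem_of_mem_erase hB),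
          mul_zero]
      have := Finset.card_erase_of_mem hinf
      omega
    · have hTne : ∀ B ∈ S, B ≠ infPt k := fun B hB he => hinf (he ▸ hB)
      have : S.card ≤ φ.natDegree := by
        refine card_le_natDegree_of_roots hφne S hTne fun B hB => ?_
        rw [chart_eval B (hTne B hB), hS B hB, mul_zero]
      omega

end Aux4
section Aux5
open MvPolynomial Polynomial Projectivization

variable {k : Type*} [Field k]

lemma sum_swap_injective : Function.Injective (Sum.swap : Fin 2 ⊕ Fin 2 → Fin 2 ⊕ Fin 2) :=
  Function.LeftInverse.injective Sum.swap_swap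

lemma isBihomogeneous_swap {F : BiPoly k} {d : ℕ × ℕ} (hF : IsBihomogeneous F d) :
    IsBihomogeneous (MvPolynomial.rename Sum.swap F) (d.2, d.1) := by
  classical
  intro m hm
  rw [MvPolynomial.support_rename_of_injective sum_swap_injective] at hm
  obtain ⟨m', hm', rfl⟩ := Finset.mem_image.mp hm
  obtain ⟨h1, h2⟩ := hF m' hm'
  have hl : ∀ i : Fin 2, (Finsupp.mapDomain Sum.swap m') (Sum.inl i) = m' (Sum.inr i) := by
    intro i
    have h : (Sum.inl i : Fin 2 ⊕ Fin 2) = Sum.swap (Sum.inr i) := rfl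
    rw [h, Finsupp.mapDomain_apply sum_swap_injective]
  have hr : ∀ i : Fin 2, (Finsupp.mapDomain Sum.swap m') (Sum.inr i) = m' (Sum.inl i) := by
    intro i
    have h : (Sum.inr i : Fin 2 ⊕ Fin 2) = Sum.swap (Sum.inl i) := rfl
    rw [h, Finsupp.mapDomain_apply sum_swap_injective]
  constructor
  · simp only [hl]; exact h2
  · simp only [hr]; exact h1

lemma eval_swap (F : BiPoly k) (p q : Fin 2 → k) :
    MvPolynomial.eval (Sum.elim q p) (MvPolynomial.rename Sum.swap F)
      = MvPolynomial.eval (Sum.elim p q) F := by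
  rw [MvPolynomial.eval_rename]
  have : (Sum.elim q p ∘ Sum.swap) = Sum.elim p q := by
    funext i; rcases i with i | i <;> rfl
  rw [this]

lemma key_x {F : BiPoly k} {d : ℕ × ℕ} (hF : IsBihomogeneous F d) (q : Fin 2 → k)
    (S : Finset (Proj1 k)) (hS : ∀ A ∈ S, MvPolynomial.eval (Sum.elim A.rep q) F = 0)
    (A₀ : Proj1 k) (hA₀ : A₀ ∉ S)
    (hnz : MvPolynomial.eval (Sum.elim A₀.rep q) F ≠ 0) :
    S.card ≤ d.1 := by
  have h := key_y (isBihomogeneous_swap hF) q S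
    (fun A hA => by rw [eval_swap]; exact hS A hA) A₀ hA₀
    (by rw [eval_swap]; exact hnz)
  exact h

end Aux5
section Aux6
open MvPolynomial Polynomial Projectivization
open scoped Classical

variable {k : Type*} [Field k]

lemma IsBihomogeneous.mul' {F G : BiPoly k} {d e : ℕ × ℕ}
    (hF : IsBihomogeneous F d) (hG : IsBihomogeneous G e) :
    IsBihomogeneous (F * G) (d + e) := by
  rw [isBihomogeneous_iff_weighted] at *
  exact hF.mul hG

lemma isBihomogeneous_prod_H (s : Finset (Proj1 k × Proj1 k)) :
    IsBihomogeneous (∏ T ∈ s, Hform T.1) ((s.card : ℕ), (0 : ℕ)) := by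
  rw [isBihomogeneous_iff_weighted]
  have h := MvPolynomial.IsWeightedHomogeneous.prod s (fun T => Hform T.1)
    (fun _ => ((1 : ℕ), (0 : ℕ)))
    (fun T _ => isBihomogeneous_iff_weighted.mp (Hform_isBihomogeneous T.1))
  have hs : (∑ _T ∈ s, ((1 : ℕ), (0 : ℕ))) = ((s.card : ℕ), (0 : ℕ)) := by
    rw [Finset.sum_const]
    apply Prod.ext <;> simp
  rwa [hs] at h

lemma isBihomogeneous_prod_V (s : Finset (Proj1 k × Proj1 k)) :
    IsBihomogeneous (∏ T ∈ s, Vform T.2) ((0 : ℕ), (s.card : ℕ)) := by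
  rw [isBihomogeneous_iff_weighted]
  have h := MvPolynomial.IsWeightedHomogeneous.prod s (fun T => Vform T.2)
    (fun _ => ((0 : ℕ), (1 : ℕ)))
    (fun T _ => isBihomogeneous_iff_weighted.mp (Vform_isBihomogeneous T.2))
  have hs : (∑ _T ∈ s, ((0 : ℕ), (1 : ℕ))) = ((0 : ℕ), (s.card : ℕ)) := by
    rw [Finset.sum_const]
    apply Prod.ext <;> simp
  rwa [hs] at h

/-- Evaluation of a product of H-forms at representatives. -/
lemma eval_prod_H_ne_zero {s : Finset (Proj1 k × Proj1 k)} {p q : Fin 2 → k} {hp : p ≠ 0}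
    (h : ∀ T ∈ s, T.1 ≠ Projectivization.mk k p hp) :
    MvPolynomial.eval (Sum.elim p q) (∏ T ∈ s, Hform T.1) ≠ 0 := by
  rw [map_prod]
  rw [Finset.prod_ne_zero_iff]
  intro T hT hz
  exact h T hT ((eval_Hform_eq_zero_iff T.1 p q hp).mp hz).symm

lemma eval_prod_V_ne_zero {s : Finset (Proj1 k × Proj1 k)} {p q : Fin 2 → k} {hq : q ≠ 0}
    (h : ∀ T ∈ s, T.2 ≠ Projectivization.mk k q hq) :
    MvPolynomial.eval (Sum.elim p q) (∏ T ∈ s, Vform T.2) ≠ 0 := by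
  rw [map_prod]
  rw [Finset.prod_ne_zero_iff]
  intro T hT hz
  exact h T hT ((eval_Vform_eq_zero_iff T.2 p q hq).mp hz).symm

lemma eval_prod_H_eq_zero {s : Finset (Proj1 k × Proj1 k)} {p q : Fin 2 → k} {hp : p ≠ 0}
    {T : Proj1 k × Proj1 k} (hT : T ∈ s) (h : T.1 = Projectivization.mk k p hp) :
    MvPolynomial.eval (Sum.elim p q) (∏ T ∈ s, Hform T.1) = 0 := by
  rw [map_prod]
  exact Finset.prod_eq_zero hT ((eval_Hform_eq_zero_iff T.1 p q hp).mpr h.symm)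

lemma eval_prod_V_eq_zero {s : Finset (Proj1 k × Proj1 k)} {p q : Fin 2 → k} {hq : q ≠ 0}
    {T : Proj1 k × Proj1 k} (hT : T ∈ s) (h : T.2 = Projectivization.mk k q hq) :
    MvPolynomial.eval (Sum.elim p q) (∏ T ∈ s, Vform T.2) = 0 := by
  rw [map_prod]
  exact Finset.prod_eq_zero hT ((eval_Vform_eq_zero_iff T.2 p q hq).mpr h.symm)

end Aux6
section Aux7
open MvPolynomial Polynomial Projectivization
open scoped Classical

variable {k : Type*} [Field k]

lemma mem_rowF {X : Finset (Proj1 k × Proj1 k)} {A B : Proj1 k}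
    {T : Proj1 k × Proj1 k} :
    T ∈ (X.filter fun T => T.2 = B).erase (A, B) ↔ T ∈ X ∧ T.2 = B ∧ T.1 ≠ A := by
  rw [Finset.mem_erase, Finset.mem_filter]
  constructor
  · rintro ⟨hne, hX, h2⟩
    refine ⟨hX, h2, fun h1 => hne ?_⟩
    rw [← h1, ← h2]
  · rintro ⟨hX, h2, h1⟩
    exact ⟨fun he => h1 (by rw [he]), hX, h2⟩

lemma mem_colF {X : Finset (Proj1 k × Proj1 k)} {A B : Proj1 k}
    {T : Proj1 k × Proj1 k} :
    T ∈ (X.filter fun T => T.1 = A).erase (A, B) ↔ T ∈ X ∧ T.1 = A ∧ T.2 ≠ B := by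
  rw [Finset.mem_erase, Finset.mem_filter]
  constructor
  · rintro ⟨hne, hX, h1⟩
    refine ⟨hX, h1, fun h2 => hne ?_⟩
    rw [← h1, ← h2]
  · rintro ⟨hX, h1, h2⟩
    exact ⟨fun he => h2 (by rw [he]), hX, h1⟩

/-- Under property (*), the expected minimal bidegree is achieved by a separator. -/
lemma star_min_separator {X : Finset (Proj1 k × Proj1 k)} (hstar : PropertyStar X)
    {A B : Proj1 k} (hP : (A, B) ∈ X) :
    (((X.filter fun T => T.2 = B).card - 1, (X.filter fun T => T.1 = A).card - 1) : ℕ × ℕ)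
      ∈ sepDegrees X (A, B) := by
  set rowF := (X.filter fun T => T.2 = B).erase (A, B) with hrow
  set colF := (X.filter fun T => T.1 = A).erase (A, B) with hcol
  set F := (∏ T ∈ rowF, Hform T.1) * (∏ T ∈ colF, Vform T.2) with hFdef
  have hc1 : rowF.card = (X.filter fun T => T.2 = B).card - 1 :=
    Finset.card_erase_of_mem (Finset.mem_filter.mpr ⟨hP, rfl⟩)
  have hc2 : colF.card = (X.filter fun T => T.1 = A).card - 1 :=
    Finset.card_erase_of_mem (Finset.mem_filter.mpr ⟨hP, rfl⟩)
  have hbh : IsBihomogeneous F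
      (((X.filter fun T => T.2 = B).card - 1, (X.filter fun T => T.1 = A).card - 1)) := by
    have h := (isBihomogeneous_prod_H rowF).mul' (isBihomogeneous_prod_V colF)
    rw [hc1, hc2] at h
    simpa using h
  refine ⟨F, hbh, ?_, ?_⟩
  · rw [not_vanishesAt_iff hbh]
    show MvPolynomial.eval (Sum.elim A.rep B.rep) F ≠ 0
    rw [hFdef, map_mul]
    refine mul_ne_zero ?_ ?_
    · refine eval_prod_H_ne_zero (hp := A.rep_nonzero) fun T hT => ?_
      rw [Projectivization.mk_rep]
      exact (mem_rowF.mp hT).2.2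
    · refine eval_prod_V_ne_zero (hq := B.rep_nonzero) fun T hT => ?_
      rw [Projectivization.mk_rep]
      exact (mem_colF.mp hT).2.2
  · intro Q hQ hne
    apply vanishesAt_of_eval_rep_eq_zero hbh
    rw [hFdef, map_mul]
    by_cases hQB : Q.2 = B
    · have hQ1 : Q.1 ≠ A := fun h1 => hne (Prod.ext h1 hQB)
      have hmem : Q ∈ rowF := mem_rowF.mpr ⟨hQ, hQB, hQ1⟩
      rw [eval_prod_H_eq_zero (hp := Q.1.rep_nonzero) hmem (Projectivization.mk_rep _).symm,
        zero_mul]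
    · by_cases hQA : Q.1 = A
      · have hmem : Q ∈ colF := mem_colF.mpr ⟨hQ, hQA, hQB⟩
        rw [eval_prod_V_eq_zero (hq := Q.2.rep_nonzero) hmem (Projectivization.mk_rep _).symm,
          mul_zero]
      · have hQ' : (Q.1, Q.2) ∈ X := by simpa using hQ
        rcases hstar A B Q.1 Q.2 hP hQ' (fun h => hQA h.symm) (fun h => hQB h.symm) with h | h
        · have hmem : ((A, Q.2) : Proj1 k × Proj1 k) ∈ colF :=
            mem_colF.mpr ⟨h, rfl, hQB⟩
          rw [eval_prod_V_eq_zero (hq := Q.2.rep_nonzero) hmem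
            (Projectivization.mk_rep _).symm, mul_zero]
        · have hmem : ((Q.1, B) : Proj1 k × Proj1 k) ∈ rowF :=
            mem_rowF.mpr ⟨h, rfl, hQA⟩
          rw [eval_prod_H_eq_zero (hp := Q.1.rep_nonzero) hmem
            (Projectivization.mk_rep _).symm, zero_mul]

/-- There is always a separator whose `x`-degree is the minimal possible one. -/
lemma sep_row {X : Finset (Proj1 k × Proj1 k)} {A B : Proj1 k} (hP : (A, B) ∈ X) :
    ∃ N : ℕ, (((X.filter fun T => T.2 = B).card - 1, N) : ℕ × ℕ) ∈ sepDegrees X (A, B) := by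
  set rowF := (X.filter fun T => T.2 = B).erase (A, B) with hrow
  set offF := X.filter fun T => T.2 ≠ B with hoff
  set F := (∏ T ∈ rowF, Hform T.1) * (∏ T ∈ offF, Vform T.2) with hFdef
  have hc1 : rowF.card = (X.filter fun T => T.2 = B).card - 1 :=
    Finset.card_erase_of_mem (Finset.mem_filter.mpr ⟨hP, rfl⟩)
  have hbh : IsBihomogeneous F (((X.filter fun T => T.2 = B).card - 1, offF.card)) := by
    have h := (isBihomogeneous_prod_H rowF).mul' (isBihomogeneous_prod_V offF)
    rw [hc1] at h
    simpa using h
  refine ⟨offF.card, F, hbh, ?_, ?_⟩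
  · rw [not_vanishesAt_iff hbh]
    show MvPolynomial.eval (Sum.elim A.rep B.rep) F ≠ 0
    rw [hFdef, map_mul]
    refine mul_ne_zero ?_ ?_
    · refine eval_prod_H_ne_zero (hp := A.rep_nonzero) fun T hT => ?_
      rw [Projectivization.mk_rep]
      exact (mem_rowF.mp hT).2.2
    · refine eval_prod_V_ne_zero (hq := B.rep_nonzero) fun T hT => ?_
      rw [Projectivization.mk_rep]
      exact (Finset.mem_filter.mp hT).2
  · intro Q hQ hne
    apply vanishesAt_of_eval_rep_eq_zero hbh
    rw [hFdef, map_mul]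
    by_cases hQB : Q.2 = B
    · have hQ1 : Q.1 ≠ A := fun h1 => hne (Prod.ext h1 hQB)
      have hmem : Q ∈ rowF := mem_rowF.mpr ⟨hQ, hQB, hQ1⟩
      rw [eval_prod_H_eq_zero (hp := Q.1.rep_nonzero) hmem (Projectivization.mk_rep _).symm,
        zero_mul]
    · have hmem : Q ∈ offF := Finset.mem_filter.mpr ⟨hQ, hQB⟩
      rw [eval_prod_V_eq_zero (hq := Q.2.rep_nonzero) hmem (Projectivization.mk_rep _).symm,
        mul_zero]

/-- There is always a separator whose `y`-degree is the minimal possible one. -/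
lemma sep_col {X : Finset (Proj1 k × Proj1 k)} {A B : Proj1 k} (hP : (A, B) ∈ X) :
    ∃ M : ℕ, ((M, (X.filter fun T => T.1 = A).card - 1) : ℕ × ℕ) ∈ sepDegrees X (A, B) := by
  set colF := (X.filter fun T => T.1 = A).erase (A, B) with hcol
  set offF := X.filter fun T => T.1 ≠ A with hoff
  set F := (∏ T ∈ offF, Hform T.1) * (∏ T ∈ colF, Vform T.2) with hFdef
  have hc2 : colF.card = (X.filter fun T => T.1 = A).card - 1 :=
    Finset.card_erase_of_mem (Finset.mem_filter.mpr ⟨hP, rfl⟩)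
  have hbh : IsBihomogeneous F ((offF.card, (X.filter fun T => T.1 = A).card - 1)) := by
    have h := (isBihomogeneous_prod_H offF).mul' (isBihomogeneous_prod_V colF)
    rw [hc2] at h
    simpa using h
  refine ⟨offF.card, F, hbh, ?_, ?_⟩
  · rw [not_vanishesAt_iff hbh]
    show MvPolynomial.eval (Sum.elim A.rep B.rep) F ≠ 0
    rw [hFdef, map_mul]
    refine mul_ne_zero ?_ ?_
    · refine eval_prod_H_ne_zero (hp := A.rep_nonzero) fun T hT => ?_
      rw [Projectivization.mk_rep]
      exact (Finset.mem_filter.mp hT).2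
    · refine eval_prod_V_ne_zero (hq := B.rep_nonzero) fun T hT => ?_
      rw [Projectivization.mk_rep]
      exact (mem_colF.mp hT).2.2
  · intro Q hQ hne
    apply vanishesAt_of_eval_rep_eq_zero hbh
    rw [hFdef, map_mul]
    by_cases hQA : Q.1 = A
    · have hQ2 : Q.2 ≠ B := fun h2 => hne (Prod.ext hQA h2)
      have hmem : Q ∈ colF := mem_colF.mpr ⟨hQ, hQA, hQ2⟩
      rw [eval_prod_V_eq_zero (hq := Q.2.rep_nonzero) hmem (Projectivization.mk_rep _).symm,
        mul_zero]
    · have hmem : Q ∈ offF := Finset.mem_filter.mpr ⟨hQ, hQA⟩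
      rw [eval_prod_H_eq_zero (hp := Q.1.rep_nonzero) hmem (Projectivization.mk_rep _).symm,
        zero_mul]

end Aux7
section Aux8
open MvPolynomial Polynomial Projectivization
open scoped Classical

variable {k : Type*} [Field k]

/-- Lower bound: every separator bidegree dominates the expected minimal one. -/
lemma sep_lb {X : Finset (Proj1 k × Proj1 k)} {A B : Proj1 k} (hP : (A, B) ∈ X)
    {dd : ℕ × ℕ} (hd : dd ∈ sepDegrees X (A, B)) :
    (X.filter fun T => T.2 = B).card - 1 ≤ dd.1 ∧
      (X.filter fun T => T.1 = A).card - 1 ≤ dd.2 := by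
  obtain ⟨F, hbh, hnv, hvan⟩ := hd
  have hnz : MvPolynomial.eval (Sum.elim A.rep B.rep) F ≠ 0 :=
    (not_vanishesAt_iff hbh ((A, B))).mp hnv
  constructor
  · set S := ((X.filter fun T => T.2 = B).erase (A, B)).image Prod.fst with hSdef
    have hinj : Set.InjOn (Prod.fst : Proj1 k × Proj1 k → Proj1 k) ↑((X.filter fun T => T.2 = B).erase (A, B)) := by
      intro T hT T' hT' h
      exact Prod.ext h ((mem_rowF.mp hT).2.1.trans (mem_rowF.mp hT').2.1.symm)
    have hcard : S.card = (X.filter fun T => T.2 = B).card - 1 := by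
      rw [hSdef, Finset.card_image_of_injOn hinj,
        Finset.card_erase_of_mem (show ((A, B) : Proj1 k × Proj1 k) ∈
          X.filter (fun T => T.2 = B) from Finset.mem_filter.mpr ⟨hP, rfl⟩)]
    have hvS : ∀ A'' ∈ S, MvPolynomial.eval (Sum.elim A''.rep B.rep) F = 0 := by
      intro A'' hA''
      obtain ⟨T, hT, rfl⟩ := Finset.mem_image.mp hA''
      obtain ⟨hTX, hT2, hT1⟩ := mem_rowF.mp hT
      exact hvan T hTX (fun he => hT1 (by rw [he]))
        T.1.rep B.rep T.1.rep_nonzero B.rep_nonzero (Projectivization.mk_rep _)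
        (by rw [Projectivization.mk_rep, hT2])
    have hAS : A ∉ S := by
      intro hA
      obtain ⟨T, hT, hT1⟩ := Finset.mem_image.mp hA
      exact (mem_rowF.mp hT).2.2 hT1
    have hkey := key_x hbh B.rep S hvS A hAS hnz
    omega
  · set S := ((X.filter fun T => T.1 = A).erase (A, B)).image Prod.snd with hSdef
    have hinj : Set.InjOn (Prod.snd : Proj1 k × Proj1 k → Proj1 k) ↑((X.filter fun T => T.1 = A).erase (A, B)) := by
      intro T hT T' hT' h
      exact Prod.ext ((mem_colF.mp hT).2.1.trans (mem_colF.mp hT').2.1.symm) h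
    have hcard : S.card = (X.filter fun T => T.1 = A).card - 1 := by
      rw [hSdef, Finset.card_image_of_injOn hinj,
        Finset.card_erase_of_mem (show ((A, B) : Proj1 k × Proj1 k) ∈
          X.filter (fun T => T.1 = A) from Finset.mem_filter.mpr ⟨hP, rfl⟩)]
    have hvS : ∀ B'' ∈ S, MvPolynomial.eval (Sum.elim A.rep B''.rep) F = 0 := by
      intro B'' hB''
      obtain ⟨T, hT, rfl⟩ := Finset.mem_image.mp hB''
      obtain ⟨hTX, hT1, hT2⟩ := mem_colF.mp hT
      exact hvan T hTX (fun he => hT2 (by rw [he]))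
        A.rep T.2.rep A.rep_nonzero T.2.rep_nonzero
        (by rw [Projectivization.mk_rep, hT1]) (Projectivization.mk_rep _)
    have hBS : B ∉ S := by
      intro hB
      obtain ⟨T, hT, hT2⟩ := Finset.mem_image.mp hB
      exact (mem_colF.mp hT).2.2 hT2
    have hkey := key_y hbh A.rep S hvS B hBS hnz
    omega

/-- Counting lemma: a minimal-bidegree separator at `(A,B)` forces every
"column" missing `A` to be strictly smaller than the column of `B`. -/
lemma c_lemma {X : Finset (Proj1 k × Proj1 k)} {A B : Proj1 k} (hP : (A, B) ∈ X)
    (hmin : (((X.filter fun T => T.2 = B).card - 1,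
        (X.filter fun T => T.1 = A).card - 1) : ℕ × ℕ) ∈ sepDegrees X (A, B))
    {B' : Proj1 k} (hB' : ((A, B') : Proj1 k × Proj1 k) ∉ X) :
    (X.filter fun T => T.2 = B').card < (X.filter fun T => T.2 = B).card := by
  obtain ⟨F, hbh, hnv, hvan⟩ := hmin
  have hBB' : B' ≠ B := fun h => hB' (by rw [h]; exact hP)
  have hnz : MvPolynomial.eval (Sum.elim A.rep B.rep) F ≠ 0 :=
    (not_vanishesAt_iff hbh ((A, B))).mp hnv
  have hcolpos : 1 ≤ (X.filter fun T => T.1 = A).card :=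
    Finset.card_pos.mpr ⟨(A, B), Finset.mem_filter.mpr ⟨hP, rfl⟩⟩
  have hrowpos : 1 ≤ (X.filter fun T => T.2 = B).card :=
    Finset.card_pos.mpr ⟨(A, B), Finset.mem_filter.mpr ⟨hP, rfl⟩⟩
  -- Step 1: F does not vanish at (A, B').
  have hstep1 : MvPolynomial.eval (Sum.elim A.rep B'.rep) F ≠ 0 := by
    intro hz
    set S := (((X.filter fun T => T.1 = A).erase (A, B)).image Prod.snd) ∪ {B'} with hSdef
    have hB'im : B' ∉ ((X.filter fun T => T.1 = A).erase (A, B)).image Prod.snd := by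
      intro hmem
      obtain ⟨T, hT, hT2⟩ := Finset.mem_image.mp hmem
      obtain ⟨hTX, hT1, _⟩ := mem_colF.mp hT
      exact hB' (by rw [← hT1, ← hT2]; exact hTX)
    have hinj : Set.InjOn (Prod.snd : Proj1 k × Proj1 k → Proj1 k) ↑((X.filter fun T => T.1 = A).erase (A, B)) := by
      intro T hT T' hT' h
      exact Prod.ext ((mem_colF.mp hT).2.1.trans (mem_colF.mp hT').2.1.symm) h
    have hcard : S.card = (X.filter fun T => T.1 = A).card := by
      rw [hSdef, Finset.card_union_of_disjoint (Finset.disjoint_singleton_right.mpr hB'im),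
        Finset.card_image_of_injOn hinj,
        Finset.card_erase_of_mem (show ((A, B) : Proj1 k × Proj1 k) ∈
          X.filter (fun T => T.1 = A) from Finset.mem_filter.mpr ⟨hP, rfl⟩),
        Finset.card_singleton]
      omega
    have hvS : ∀ C ∈ S, MvPolynomial.eval (Sum.elim A.rep C.rep) F = 0 := by
      intro C hC
      rcases Finset.mem_union.mp hC with hC | hC
      · obtain ⟨T, hT, rfl⟩ := Finset.mem_image.mp hC
        obtain ⟨hTX, hT1, hT2⟩ := mem_colF.mp hT
        exact hvan T hTX (fun he => hT2 (by rw [he]))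
          A.rep T.2.rep A.rep_nonzero T.2.rep_nonzero
          (by rw [Projectivization.mk_rep, hT1]) (Projectivization.mk_rep _)
      · rw [Finset.mem_singleton.mp hC]
        exact hz
    have hBS : B ∉ S := by
      intro hB
      rcases Finset.mem_union.mp hB with hB | hB
      · obtain ⟨T, hT, hT2⟩ := Finset.mem_image.mp hB
        exact (mem_colF.mp hT).2.2 hT2
      · exact hBB' (Finset.mem_singleton.mp hB).symm
    have hkey := key_y hbh A.rep S hvS B hBS hnz
    rw [hcard] at hkey
    omega
  -- Step 2: count the points with second coordinate B'.
  set S2 := (X.filter fun T => T.2 = B').image Prod.fst with hS2def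
  have hinj2 : Set.InjOn (Prod.fst : Proj1 k × Proj1 k → Proj1 k) ↑(X.filter fun T => T.2 = B') := by
    intro T hT T' hT' h
    exact Prod.ext h ((Finset.mem_filter.mp hT).2.trans (Finset.mem_filter.mp hT').2.symm)
  have hcard2 : S2.card = (X.filter fun T => T.2 = B').card :=
    Finset.card_image_of_injOn hinj2
  have hvS2 : ∀ A'' ∈ S2, MvPolynomial.eval (Sum.elim A''.rep B'.rep) F = 0 := by
    intro A'' hA''
    obtain ⟨T, hT, rfl⟩ := Finset.mem_image.mp hA''
    obtain ⟨hTX, hT2⟩ := Finset.mem_filter.mp hT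
    have hTne : T ≠ (A, B) := fun he => hBB' (by rw [← hT2, he])
    exact hvan T hTX hTne T.1.rep B'.rep T.1.rep_nonzero B'.rep_nonzero
      (Projectivization.mk_rep _) (by rw [Projectivization.mk_rep, hT2])
  have hAS2 : A ∉ S2 := by
    intro hA
    obtain ⟨T, hT, hT1⟩ := Finset.mem_image.mp hA
    obtain ⟨hTX, hT2⟩ := Finset.mem_filter.mp hT
    exact hB' (by rw [← hT1, ← hT2]; exact hTX)
  have hkey2 := key_x hbh B'.rep S2 hvS2 A hAS2 hstep1
  omega

end Aux8
section Main
open scoped Classical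

variable {k : Type*} [Field k]

lemma degSet_singleton_iff {X : Finset (Proj1 k × Proj1 k)} {A B : Proj1 k}
    (hP : (A, B) ∈ X) :
    (∃ d : ℕ × ℕ, degSet X (A, B) = {d}) ↔
      (((X.filter fun T => T.2 = B).card - 1,
        (X.filter fun T => T.1 = A).card - 1) : ℕ × ℕ) ∈ sepDegrees X (A, B) := by
  set m0 : ℕ × ℕ := ((X.filter fun T => T.2 = B).card - 1,
    (X.filter fun T => T.1 = A).card - 1) with hm0
  constructor
  · rintro ⟨d, hd⟩
    have hdmem : d ∈ degSet X (A, B) := by rw [hd]; exact Set.mem_singleton d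
    obtain ⟨hdsep, hdmin⟩ := hdmem
    have hminex : ∀ e ∈ sepDegrees X (A, B), ∃ f ∈ degSet X (A, B), f ≤ e := by
      intro e he
      have hne : {f | f ∈ sepDegrees X (A, B) ∧ f ≤ e}.Nonempty := ⟨e, he, le_refl e⟩
      obtain ⟨f, ⟨hfsep, hfe⟩, hmin⟩ := (wellFounded_lt (α := ℕ × ℕ)).has_min _ hne
      refine ⟨f, ⟨hfsep, ?_⟩, hfe⟩
      intro g hg hgf
      by_contra hne'
      exact hmin g ⟨hg, hgf.trans hfe⟩ (lt_of_le_of_ne hgf hne')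
    obtain ⟨N, hN⟩ := sep_row hP
    obtain ⟨M, hM⟩ := sep_col hP
    obtain ⟨f1, hf1, hle1⟩ := hminex _ hN
    obtain ⟨f2, hf2, hle2⟩ := hminex _ hM
    rw [hd] at hf1 hf2
    have hf1d : f1 = d := hf1
    have hf2d : f2 = d := hf2
    have hlb := sep_lb hP hdsep
    have h1 : d.1 = m0.1 := by
      have := hle1.1
      rw [hf1d] at this
      exact le_antisymm this hlb.1
    have h2 : d.2 = m0.2 := by
      have := hle2.2
      rw [hf2d] at this
      exact le_antisymm this hlb.2
    have : d = m0 := Prod.ext h1 h2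
    rw [← this]
    exact hdsep
  · intro hmem
    refine ⟨m0, ?_⟩
    apply Set.eq_singleton_iff_unique_mem.mpr
    constructor
    · refine ⟨hmem, fun e he hle => ?_⟩
      have hlb := sep_lb hP he
      exact le_antisymm hle ⟨hlb.1, hlb.2⟩
    · rintro e ⟨hesep, hemin⟩
      have hlb := sep_lb hP hesep
      exact (hemin m0 hmem ⟨hlb.1, hlb.2⟩).symm

end Main
open scoped Classical

/-- A finite set of points `X ⊆ ℙ¹×ℙ¹` satisfies property (*) if and only if
`deg_X(P)` consists of exactly one element for every `P ∈ X`. -/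
theorem propertyStar_iff_degree_singleton [IsAlgClosed k] [CharZero k]
    (X : Finset (Proj1 k × Proj1 k)) :
    PropertyStar X ↔ ∀ P ∈ X, ∃ d : ℕ × ℕ, degSet X P = {d} := by
  constructor
  · intro hstar P hP
    obtain ⟨A, B⟩ := P
    exact (degSet_singleton_iff hP).mpr (star_min_separator hstar hP)
  · intro h A B A' B' hAB hA'B' hAA' hBB'
    by_contra hcon
    push_neg at hcon
    obtain ⟨h1, h2⟩ := hcon
    have hm1 := (degSet_singleton_iff hAB).mp (h _ hAB)
    have hm2 := (degSet_singleton_iff hA'B').mp (h _ hA'B')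
    have hlt1 := c_lemma hAB hm1 h1
    have hlt2 := c_lemma hA'B' hm2 h2
    omega
end

section
/- Let X be a finite set of distinct points in ℙ¹×ℙ¹ over k containing points P₁×Q₁ and P₂×Q₂ with P₁ ≠ P₂ and Q₁ ≠ Q₂ such that neither P₁×Q₂ nor P₂×Q₁ belongs to X. Suppose moreover that |X_{P₁,1}| = 1 and |X_{Q₁,2}| > 1. Then deg_X(P₁×Q₁) contains at least two elements. -/
variable {k : Type*} [Field k]

section AuxCase3

open MvPolynomial

namespace AuxCase3

variable {k : Type*} [Field k]

lemma vec_ne_zero (a : k) : ![a, (1:k)] ≠ 0 := by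
  intro h
  simpa using congrFun h 1

lemma e0_ne_zero : ![(1:k), 0] ≠ 0 := by
  intro h
  simpa using congrFun h 0

lemma mk_eq_mk_iff_det (p v : Fin 2 → k) (hp : p ≠ 0) (hv : v ≠ 0) :
    Projectivization.mk k p hp = Projectivization.mk k v hv ↔
      p 0 * v 1 - p 1 * v 0 = 0 := by
  rw [Projectivization.mk_eq_mk_iff]
  constructor
  · rintro ⟨a, rfl⟩
    simp only [Pi.smul_apply, Units.smul_def, smul_eq_mul]
    ring
  · intro hdet
    by_cases hv0 : v 0 ≠ 0
    · have hp0 : p 0 ≠ 0 := by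
        intro h0
        apply hp
        have h1 : p 1 = 0 := by
          have : p 1 * v 0 = 0 := by rw [← sub_eq_zero.mp hdet, h0, zero_mul]
          exact (mul_eq_zero.mp this).resolve_right hv0
        funext i; fin_cases i <;> simp [h0, h1]
      refine ⟨Units.mk0 (p 0 / v 0) (div_ne_zero hp0 hv0), ?_⟩
      funext i; fin_cases i
      · simp only [Pi.smul_apply, Units.smul_def, smul_eq_mul, Units.val_mk0]
        exact div_mul_cancel₀ _ hv0
      · show p 0 / v 0 * v 1 = p 1
        rw [div_mul_eq_mul_div, div_eq_iff hv0]
        linear_combination hdet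
    · push_neg at hv0
      have hv1 : v 1 ≠ 0 := by
        intro h1; exact hv (funext fun i => by fin_cases i <;> simp [hv0, h1])
      have hp0 : p 0 = 0 := by
        have : p 0 * v 1 = 0 := by
          have := sub_eq_zero.mp hdet; rw [this, hv0, mul_zero]
        exact (mul_eq_zero.mp this).resolve_right hv1
      have hp1 : p 1 ≠ 0 := by
        intro h1; exact hp (funext fun i => by fin_cases i <;> simp [hp0, h1])
      refine ⟨Units.mk0 (p 1 / v 1) (div_ne_zero hp1 hv1), ?_⟩
      funext i; fin_cases i
      · show p 1 / v 1 * v 0 = p 0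
        rw [hv0, mul_zero, hp0]
      · simp only [Pi.smul_apply, Units.smul_def, smul_eq_mul, Units.val_mk0]
        exact div_mul_cancel₀ _ hv1

lemma eval_elim (p q : Fin 2 → k) (F : BiPoly k) :
    MvPolynomial.eval (Sum.elim p q) F =
      ∑ m ∈ F.support, F.coeff m *
        ((∏ i : Fin 2, p i ^ m (Sum.inl i)) * ∏ i : Fin 2, q i ^ m (Sum.inr i)) := by
  rw [eval_eq']
  refine Finset.sum_congr rfl fun m _ => ?_
  rw [Fintype.prod_sum_type]
  simp

lemma eval_smul_x {F : BiPoly k} {a b : ℕ} (h : IsBihomogeneous F (a, b)) (c : k)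
    (p q : Fin 2 → k) :
    MvPolynomial.eval (Sum.elim (fun i => c * p i) q) F
      = c ^ a * MvPolynomial.eval (Sum.elim p q) F := by
  rw [eval_elim, eval_elim, Finset.mul_sum]
  refine Finset.sum_congr rfl fun m hm => ?_
  have h1 : ∑ i : Fin 2, m (Sum.inl i) = a := (h m hm).1
  have hprod : ∏ i : Fin 2, (c * p i) ^ m (Sum.inl i)
      = c ^ a * ∏ i : Fin 2, p i ^ m (Sum.inl i) := by
    rw [← h1, ← Finset.prod_pow_eq_pow_sum, ← Finset.prod_mul_distrib]
    exact Finset.prod_congr rfl fun i _ => mul_pow _ _ _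
  rw [hprod]; ring

lemma eval_y_const {F : BiPoly k} {c : ℕ} (h : IsBihomogeneous F (c, 0))
    (p q q' : Fin 2 → k) :
    MvPolynomial.eval (Sum.elim p q) F = MvPolynomial.eval (Sum.elim p q') F := by
  rw [eval_elim, eval_elim]
  refine Finset.sum_congr rfl fun m hm => ?_
  have h2 : m (Sum.inr 0) + m (Sum.inr 1) = 0 := by
    have hh : ∑ i : Fin 2, m (Sum.inr i) = 0 := (h m hm).2
    rwa [Fin.sum_univ_two] at hh
  have hz0 : m (Sum.inr 0) = 0 := by omega
  have hz1 : m (Sum.inr 1) = 0 := by omega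
  simp [Fin.prod_univ_two, hz0, hz1]

/-- linear form in the x variables vanishing exactly at `[v]` -/
noncomputable def lx (v : Fin 2 → k) : BiPoly k :=
  C (v 1) * X (Sum.inl 0) - C (v 0) * X (Sum.inl 1)

/-- linear form in the y variables vanishing exactly at `[w]` -/
noncomputable def ly (w : Fin 2 → k) : BiPoly k :=
  C (w 1) * X (Sum.inr 0) - C (w 0) * X (Sum.inr 1)

lemma eval_lx (v p q : Fin 2 → k) :
    MvPolynomial.eval (Sum.elim p q) (lx v) = p 0 * v 1 - p 1 * v 0 := by
  simp [lx]; ring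

lemma eval_ly (w p q : Fin 2 → k) :
    MvPolynomial.eval (Sum.elim p q) (ly w) = q 0 * w 1 - q 1 * w 0 := by
  simp [ly]; ring

lemma bihom_lx (v : Fin 2 → k) : IsBihomogeneous (lx v) (1, 0) := by
  intro m hm
  have hc : MvPolynomial.coeff m (lx v) ≠ 0 := MvPolynomial.mem_support_iff.mp hm
  have : m = Finsupp.single (Sum.inl 0) 1 ∨ m = Finsupp.single (Sum.inl 1) 1 := by
    by_contra hcon
    push_neg at hcon
    apply hc
    rw [lx, MvPolynomial.coeff_sub, MvPolynomial.coeff_C_mul, MvPolynomial.coeff_C_mul,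
      MvPolynomial.coeff_X', MvPolynomial.coeff_X',
      if_neg (fun h => hcon.1 h.symm), if_neg (fun h => hcon.2 h.symm)]
    ring
  rcases this with rfl | rfl <;>
    constructor <;> simp [Fin.sum_univ_two, Finsupp.single_apply]

lemma bihom_ly (w : Fin 2 → k) : IsBihomogeneous (ly w) (0, 1) := by
  intro m hm
  have hc : MvPolynomial.coeff m (ly w) ≠ 0 := MvPolynomial.mem_support_iff.mp hm
  have : m = Finsupp.single (Sum.inr 0) 1 ∨ m = Finsupp.single (Sum.inr 1) 1 := by
    by_contra hcon
    push_neg at hcon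
    apply hc
    rw [ly, MvPolynomial.coeff_sub, MvPolynomial.coeff_C_mul, MvPolynomial.coeff_C_mul,
      MvPolynomial.coeff_X', MvPolynomial.coeff_X',
      if_neg (fun h => hcon.1 h.symm), if_neg (fun h => hcon.2 h.symm)]
    ring
  rcases this with rfl | rfl <;>
    constructor <;> simp [Fin.sum_univ_two, Finsupp.single_apply]

lemma bihom_mul {F G : BiPoly k} {d e : ℕ × ℕ} (hF : IsBihomogeneous F d)
    (hG : IsBihomogeneous G e) : IsBihomogeneous (F * G) (d.1 + e.1, d.2 + e.2) := by
  intro m hm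
  have hmem := MvPolynomial.support_mul F G hm
  rw [Finset.mem_add] at hmem
  obtain ⟨m₁, hm₁, m₂, hm₂, rfl⟩ := hmem
  obtain ⟨h1, h2⟩ := hF m₁ hm₁
  obtain ⟨h3, h4⟩ := hG m₂ hm₂
  constructor <;> simp [Finsupp.add_apply, Finset.sum_add_distrib, h1, h2, h3, h4]

lemma bihom_prod_x {ι : Type*} (s : Finset ι) (f : ι → Fin 2 → k) :
    IsBihomogeneous (∏ i ∈ s, lx (f i)) (s.card, 0) := by
  classical
  induction s using Finset.cons_induction with
  | empty =>
    intro m hm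
    simp only [Finset.prod_empty] at hm
    have hc := MvPolynomial.mem_support_iff.mp hm
    rw [MvPolynomial.coeff_one] at hc
    by_cases h0 : (0 : (Fin 2 ⊕ Fin 2) →₀ ℕ) = m
    · subst h0; simp
    · simp [h0] at hc
  | cons a s ha ih =>
    rw [Finset.prod_cons, Finset.card_cons]
    have hbm := bihom_mul (bihom_lx (f a)) ih
    have he : ((1 : ℕ) + s.card, (0 : ℕ) + 0) = (s.card + 1, 0) := by
      simp [Nat.add_comm]
    exact he ▸ hbm

lemma bihom_prod_y {ι : Type*} (s : Finset ι) (f : ι → Fin 2 → k) :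
    IsBihomogeneous (∏ i ∈ s, ly (f i)) (0, s.card) := by
  classical
  induction s using Finset.cons_induction with
  | empty =>
    intro m hm
    simp only [Finset.prod_empty] at hm
    have hc := MvPolynomial.mem_support_iff.mp hm
    rw [MvPolynomial.coeff_one] at hc
    by_cases h0 : (0 : (Fin 2 ⊕ Fin 2) →₀ ℕ) = m
    · subst h0; simp
    · simp [h0] at hc
  | cons a s ha ih =>
    rw [Finset.prod_cons, Finset.card_cons]
    have hbm := bihom_mul (bihom_ly (f a)) ih
    have he : ((0 : ℕ) + 0, (1 : ℕ) + s.card) = (0, s.card + 1) := by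
      simp [Nat.add_comm]
    exact he ▸ hbm

/-- dehomogenization of an `(c,0)`-form to a univariate polynomial -/
noncomputable def dehom (F : BiPoly k) : Polynomial k :=
  ∑ m ∈ F.support, Polynomial.C (F.coeff m) * Polynomial.X ^ m (Sum.inl 0)

lemma mono_eq {F : BiPoly k} {c : ℕ} (h : IsBihomogeneous F (c, 0))
    {m : (Fin 2 ⊕ Fin 2) →₀ ℕ} (hm : m ∈ F.support) (h0 : m (Sum.inl 0) = c) :
    m = Finsupp.single (Sum.inl 0) c := by
  have h1 : m (Sum.inl 0) + m (Sum.inl 1) = c := by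
    have hh : ∑ i : Fin 2, m (Sum.inl i) = c := (h m hm).1
    rwa [Fin.sum_univ_two] at hh
  have h2 : m (Sum.inr 0) + m (Sum.inr 1) = 0 := by
    have hh : ∑ i : Fin 2, m (Sum.inr i) = 0 := (h m hm).2
    rwa [Fin.sum_univ_two] at hh
  have e1 : m (Sum.inl 1) = 0 := by omega
  have e2 : m (Sum.inr 0) = 0 := by omega
  have e3 : m (Sum.inr 1) = 0 := by omega
  ext i
  rcases i with i | i <;> fin_cases i <;>
    simp [Finsupp.single_apply, h0, e1, e2, e3]

lemma dehom_eval {F : BiPoly k} {c : ℕ} (h : IsBihomogeneous F (c, 0)) (t : k)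
    (q : Fin 2 → k) :
    MvPolynomial.eval (Sum.elim ![t, 1] q) F = (dehom F).eval t := by
  rw [eval_elim]
  unfold dehom
  rw [Polynomial.eval_finset_sum]
  refine Finset.sum_congr rfl fun m hm => ?_
  have h2 : m (Sum.inr 0) + m (Sum.inr 1) = 0 := by
    have hh : ∑ i : Fin 2, m (Sum.inr i) = 0 := (h m hm).2
    rwa [Fin.sum_univ_two] at hh
  have hz0 : m (Sum.inr 0) = 0 := by omega
  have hz1 : m (Sum.inr 1) = 0 := by omega
  simp [Fin.prod_univ_two, hz0, hz1]

lemma dehom_natDegree {F : BiPoly k} {c : ℕ} (h : IsBihomogeneous F (c, 0)) :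
    (dehom F).natDegree ≤ c := by
  apply Polynomial.natDegree_sum_le_of_forall_le
  intro m hm
  refine le_trans (Polynomial.natDegree_C_mul_X_pow_le _ _) ?_
  have h1 : m (Sum.inl 0) + m (Sum.inl 1) = c := by
    have hh : ∑ i : Fin 2, m (Sum.inl i) = c := (h m hm).1
    rwa [Fin.sum_univ_two] at hh
  omega

lemma dehom_coeff {F : BiPoly k} {c : ℕ} (h : IsBihomogeneous F (c, 0)) :
    (dehom F).coeff c = F.coeff (Finsupp.single (Sum.inl 0) c) := by
  unfold dehom
  rw [Polynomial.finset_sum_coeff]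
  refine (Finset.sum_eq_single (Finsupp.single (Sum.inl 0) c) ?_ ?_).trans ?_
  · intro m hm hne
    have hd : m (Sum.inl 0) ≠ c := fun hdc => hne (mono_eq h hm hdc)
    rw [Polynomial.coeff_C_mul, Polynomial.coeff_X_pow,
      if_neg (fun hh => hd hh.symm), mul_zero]
  · intro hns
    simp [MvPolynomial.notMem_support_iff.mp hns]
  · simp

lemma eval_at_infty {F : BiPoly k} {c : ℕ} (h : IsBihomogeneous F (c, 0)) (p0 : k)
    (q : Fin 2 → k) :
    MvPolynomial.eval (Sum.elim ![p0, 0] q) F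
      = F.coeff (Finsupp.single (Sum.inl 0) c) * p0 ^ c := by
  rw [eval_elim]
  refine (Finset.sum_eq_single (Finsupp.single (Sum.inl 0) c) ?_ ?_).trans ?_
  · intro m hm hne
    have h1 : m (Sum.inl 0) + m (Sum.inl 1) = c := by
      have hh : ∑ i : Fin 2, m (Sum.inl i) = c := (h m hm).1
      rwa [Fin.sum_univ_two] at hh
    have hil : m (Sum.inl 1) ≠ 0 := by
      intro hz
      exact hne (mono_eq h hm (by omega))
    rw [Fin.prod_univ_two]
    simp [zero_pow hil]
  · intro hns
    simp [MvPolynomial.notMem_support_iff.mp hns]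
  · simp [Fin.prod_univ_two, Finsupp.single_apply]

lemma dehom_ne_zero {F : BiPoly k} {c : ℕ} (h : IsBihomogeneous F (c, 0))
    {p q : Fin 2 → k} (hne : MvPolynomial.eval (Sum.elim p q) F ≠ 0) :
    dehom F ≠ 0 := by
  by_cases h1 : p 1 = 0
  · have hp : p = ![p 0, 0] := by
      funext i; fin_cases i <;> simp [h1]
    rw [hp, eval_at_infty h] at hne
    have hcne : F.coeff (Finsupp.single (Sum.inl 0) c) ≠ 0 :=
      fun hz => hne (by rw [hz, zero_mul])
    intro hf
    exact hcne (by rw [← dehom_coeff h, hf, Polynomial.coeff_zero])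
  · have hp : p = fun i => p 1 * (![p 0 * (p 1)⁻¹, 1] i) := by
      funext i; fin_cases i
      · simp only [Matrix.cons_val_zero]
        show p 0 = p 1 * (p 0 * (p 1)⁻¹)
        rw [mul_comm (p 0), ← mul_assoc, mul_inv_cancel₀ h1, one_mul]
      · simp
    rw [hp, eval_smul_x h] at hne
    have h2 : MvPolynomial.eval (Sum.elim ![p 0 * (p 1)⁻¹, 1] q) F ≠ 0 :=
      fun hz => hne (by rw [hz, mul_zero])
    rw [dehom_eval h] at h2
    intro hf; rw [hf] at h2; simp at h2

/-- root-count lower bound: a separator of bidegree `(c,0)` needs `c` at least the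
number of other first coordinates. -/
lemma sep_deg_lower {X : Finset (Proj1 k × Proj1 k)} {P₁ Q₁ : Proj1 k}
    {A : Finset (Proj1 k)} (hAprop : ∀ P ∈ A, P ≠ P₁ ∧ ∃ T ∈ X, T.1 = P) {c : ℕ}
    (hsep : ((c, 0) : ℕ × ℕ) ∈ sepDegrees X (P₁, Q₁)) :
    A.card ≤ c := by
  classical
  obtain ⟨F, hFh, hFnv, hFv⟩ := hsep
  have hfne : dehom F ≠ 0 := by
    unfold VanishesAt at hFnv
    push_neg at hFnv
    obtain ⟨p, q, hp, hq, hmp, hmq, hne⟩ := hFnv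
    exact dehom_ne_zero hFh hne
  set inf : Proj1 k := Projectivization.mk k ![1, 0] e0_ne_zero with hinf
  have hvanP : ∀ P ∈ A, ∀ (p : Fin 2 → k) (hp : p ≠ 0),
      Projectivization.mk k p hp = P →
      MvPolynomial.eval (Sum.elim p fun _ => (1:k)) F = 0 := by
    intro P hPA p hp hmk
    obtain ⟨hPne, T, hTX, hTe⟩ := hAprop P hPA
    have hTne : T ≠ (P₁, Q₁) := by
      intro hTeq; apply hPne; rw [← hTe, hTeq]
    have hv := hFv T hTX hTne p T.2.rep hp T.2.rep_nonzero
      (by rw [hmk, hTe]) (Projectivization.mk_rep _)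
    rw [eval_y_const hFh p (fun _ => 1) T.2.rep]
    exact hv
  have hroots : ∀ P ∈ A.erase inf, ∃ t : k,
      Projectivization.mk k ![t, 1] (vec_ne_zero t) = P ∧ (dehom F).eval t = 0 := by
    intro P hP
    have hPinf : P ≠ inf := Finset.ne_of_mem_erase hP
    have hPA : P ∈ A := Finset.mem_of_mem_erase hP
    have hr1 : P.rep 1 ≠ 0 := by
      intro hz
      apply hPinf
      rw [hinf]
      conv_lhs => rw [← Projectivization.mk_rep P]
      rw [mk_eq_mk_iff_det]
      simp [hz]
    have hmk : Projectivization.mk k ![P.rep 0 / P.rep 1, 1]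
        (vec_ne_zero _) = P := by
      conv_rhs => rw [← Projectivization.mk_rep P]
      rw [mk_eq_mk_iff_det]
      simp only [Matrix.cons_val_zero, Matrix.cons_val_one, Matrix.head_cons, one_mul]
      rw [div_mul_cancel₀ _ hr1, sub_self]
    refine ⟨P.rep 0 / P.rep 1, hmk, ?_⟩
    rw [← dehom_eval hFh (P.rep 0 / P.rep 1) (fun _ => 1)]
    exact hvanP P hPA _ _ hmk
  choose! g hg1 hg2 using hroots
  have hinj : Set.InjOn g (A.erase inf) := by
    intro P hP P' hP' hgeq
    have h1 := hg1 P hP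
    rw [hgeq] at h1
    rw [← h1]
    exact hg1 P' hP'
  have hmaps : ∀ P ∈ A.erase inf, g P ∈ (dehom F).roots.toFinset := by
    intro P hP
    rw [Multiset.mem_toFinset, Polynomial.mem_roots']
    exact ⟨hfne, hg2 P hP⟩
  have hcard1 : (A.erase inf).card ≤ (dehom F).natDegree :=
    calc (A.erase inf).card ≤ (dehom F).roots.toFinset.card :=
          Finset.card_le_card_of_injOn g hmaps hinj
      _ ≤ Multiset.card (dehom F).roots := Multiset.toFinset_card_le _
      _ ≤ (dehom F).natDegree := Polynomial.card_roots' _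
  have hdle : (dehom F).natDegree ≤ c := dehom_natDegree hFh
  by_cases hinfA : inf ∈ A
  · have hc0 : (dehom F).coeff c = 0 := by
      rw [dehom_coeff hFh]
      have hv := hvanP inf hinfA ![1, 0] e0_ne_zero hinf.symm
      rw [eval_at_infty hFh] at hv
      simpa using hv
    have hne : (dehom F).natDegree ≠ c := by
      intro hdeg
      apply hfne
      apply Polynomial.leadingCoeff_eq_zero.mp
      have : (dehom F).leadingCoeff = (dehom F).coeff (dehom F).natDegree := rfl
      rw [this, hdeg]
      exact hc0
    have hcards : A.card = (A.erase inf).card + 1 :=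
      (Finset.card_erase_add_one hinfA).symm
    omega
  · rw [Finset.erase_eq_of_notMem hinfA] at hcard1
    omega

end AuxCase3

end AuxCase3
open AuxCase3 in
/-- Case 3: if `X` fails property (*) at `P₁×Q₁`, `P₂×Q₂` and moreover
`|X_{P₁,1}| = 1` and `|X_{Q₁,2}| > 1`, then `deg_X(P₁×Q₁)` has at least two elements. -/
theorem degree_nontrivial_of_not_star_case_three [IsAlgClosed k] [CharZero k]
    (X : Finset (Proj1 k × Proj1 k)) (P₁ Q₁ P₂ Q₂ : Proj1 k)
    (h₁ : (P₁, Q₁) ∈ X) (h₂ : (P₂, Q₂) ∈ X) (hP : P₁ ≠ P₂) (hQ : Q₁ ≠ Q₂)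
    (h₁₂ : (P₁, Q₂) ∉ X) (h₂₁ : (P₂, Q₁) ∉ X)
    (hb : fiber1Card X P₁ = 1) (ha : 1 < fiber2Card X Q₁) :
    (degSet X (P₁, Q₁)).Nontrivial := by
  classical
  set A : Finset (Proj1 k) := (X.image Prod.fst).erase P₁ with hA
  have hone : ∀ T ∈ X, T ≠ (P₁, Q₁) → T.1 ≠ P₁ := by
    intro T hT hTne hTeq
    unfold fiber1Card at hb
    rw [Finset.card_eq_one] at hb
    obtain ⟨a, haf⟩ := hb
    have hm1 : (P₁, Q₁) ∈ X.filter (fun T => T.1 = P₁) :=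
      Finset.mem_filter.mpr ⟨h₁, rfl⟩
    have hm2 : T ∈ X.filter (fun T => T.1 = P₁) :=
      Finset.mem_filter.mpr ⟨hT, hTeq⟩
    rw [haf, Finset.mem_singleton] at hm1 hm2
    exact hTne (hm2.trans hm1.symm)
  have hAprop : ∀ P ∈ A, P ≠ P₁ ∧ ∃ T ∈ X, T.1 = P := by
    intro P hPA
    refine ⟨Finset.ne_of_mem_erase hPA, ?_⟩
    have hmem := Finset.mem_of_mem_erase hPA
    rw [Finset.mem_image] at hmem
    obtain ⟨T, hT, hTe⟩ := hmem
    exact ⟨T, hT, hTe⟩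
  have hP₂A : P₂ ∈ A :=
    Finset.mem_erase.mpr ⟨Ne.symm hP, Finset.mem_image_of_mem Prod.fst h₂⟩
  have hscard : 1 ≤ A.card := Finset.card_pos.mpr ⟨P₂, hP₂A⟩
  -- first separator : bidegree (|A|, 0)
  have hsep1 : ((A.card, 0) : ℕ × ℕ) ∈ sepDegrees X (P₁, Q₁) := by
    refine ⟨∏ P ∈ A, lx (P.rep), bihom_prod_x A (fun P : Proj1 k => P.rep), ?_, ?_⟩
    · intro hv
      have h0 := hv P₁.rep Q₁.rep P₁.rep_nonzero Q₁.rep_nonzero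
        (Projectivization.mk_rep _) (Projectivization.mk_rep _)
      rw [map_prod] at h0
      obtain ⟨P, hPA, hP0⟩ := Finset.prod_eq_zero_iff.mp h0
      rw [eval_lx] at hP0
      have hPP := (mk_eq_mk_iff_det P₁.rep P.rep P₁.rep_nonzero P.rep_nonzero).mpr hP0
      rw [Projectivization.mk_rep, Projectivization.mk_rep] at hPP
      exact Finset.ne_of_mem_erase hPA hPP.symm
    · intro T hT hTne p q hp hq hmp hmq
      rw [map_prod]
      have hmem : T.1 ∈ A :=
        Finset.mem_erase.mpr ⟨hone T hT hTne, Finset.mem_image_of_mem Prod.fst hT⟩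
      refine Finset.prod_eq_zero hmem ?_
      rw [eval_lx]
      exact (mk_eq_mk_iff_det p T.1.rep hp T.1.rep_nonzero).mp
        (by rw [hmp]; exact (Projectivization.mk_rep _).symm)
  -- second separator : bidegree (|A| - 1, |B|)
  set B : Finset (Proj1 k) := (X.filter (fun T => T.1 = P₂)).image Prod.snd with hB
  have hsep2 : (((A.erase P₂).card, B.card) : ℕ × ℕ) ∈ sepDegrees X (P₁, Q₁) := by
    refine ⟨(∏ P ∈ A.erase P₂, lx P.rep) * (∏ Q ∈ B, ly Q.rep), ?_, ?_, ?_⟩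
    · have hbm := bihom_mul (bihom_prod_x (A.erase P₂) (fun P : Proj1 k => P.rep))
        (bihom_prod_y B (fun Q : Proj1 k => Q.rep))
      have he : (((A.erase P₂).card + 0 : ℕ), ((0 : ℕ) + B.card)) =
          ((A.erase P₂).card, B.card) := by simp
      exact he ▸ hbm
    · intro hv
      have h0 := hv P₁.rep Q₁.rep P₁.rep_nonzero Q₁.rep_nonzero
        (Projectivization.mk_rep _) (Projectivization.mk_rep _)
      rw [map_mul, map_prod, map_prod] at h0
      rcases mul_eq_zero.mp h0 with h0 | h0
      · obtain ⟨P, hPA, hP0⟩ := Finset.prod_eq_zero_iff.mp h0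
        rw [eval_lx] at hP0
        have hPP := (mk_eq_mk_iff_det P₁.rep P.rep P₁.rep_nonzero P.rep_nonzero).mpr hP0
        rw [Projectivization.mk_rep, Projectivization.mk_rep] at hPP
        exact Finset.ne_of_mem_erase (Finset.mem_of_mem_erase hPA) hPP.symm
      · obtain ⟨Q, hQB, hQ0⟩ := Finset.prod_eq_zero_iff.mp h0
        rw [eval_ly] at hQ0
        have hQQ := (mk_eq_mk_iff_det Q₁.rep Q.rep Q₁.rep_nonzero Q.rep_nonzero).mpr hQ0
        rw [Projectivization.mk_rep, Projectivization.mk_rep] at hQQ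
        rw [hB, Finset.mem_image] at hQB
        obtain ⟨T, hTf, hTe⟩ := hQB
        rw [Finset.mem_filter] at hTf
        apply h₂₁
        have hTeq : T = (P₂, Q₁) := by
          rw [Prod.ext_iff]
          exact ⟨hTf.2, by rw [hTe, ← hQQ]⟩
        rw [← hTeq]
        exact hTf.1
    · intro T hT hTne p q hp hq hmp hmq
      rw [map_mul, map_prod, map_prod]
      by_cases hTP₂ : T.1 = P₂
      · apply mul_eq_zero_of_right
        have hQB : T.2 ∈ B := by
          rw [hB, Finset.mem_image]
          exact ⟨T, Finset.mem_filter.mpr ⟨hT, hTP₂⟩, rfl⟩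
        refine Finset.prod_eq_zero hQB ?_
        rw [eval_ly]
        exact (mk_eq_mk_iff_det q T.2.rep hq T.2.rep_nonzero).mp
          (by rw [hmq]; exact (Projectivization.mk_rep _).symm)
      · apply mul_eq_zero_of_left
        have hmem : T.1 ∈ A.erase P₂ :=
          Finset.mem_erase.mpr ⟨hTP₂,
            Finset.mem_erase.mpr ⟨hone T hT hTne, Finset.mem_image_of_mem Prod.fst hT⟩⟩
        refine Finset.prod_eq_zero hmem ?_
        rw [eval_lx]
        exact (mk_eq_mk_iff_det p T.1.rep hp T.1.rep_nonzero).mp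
          (by rw [hmp]; exact (Projectivization.mk_rep _).symm)
  -- (|A|, 0) is a minimal separator degree
  have hd : ((A.card, 0) : ℕ × ℕ) ∈ degSet X (P₁, Q₁) := by
    refine ⟨hsep1, ?_⟩
    rintro ⟨a, b⟩ he hle
    rw [Prod.mk_le_mk] at hle
    have hb0 : b = 0 := Nat.le_zero.mp hle.2
    subst hb0
    have hlow := sep_deg_lower hAprop he
    have hac : a = A.card := le_antisymm hle.1 hlow
    rw [hac]
  -- minimal separator degree below ((A.erase P₂).card, B.card)
  have hexist : ∃ n, ∃ m : ℕ × ℕ, m ∈ sepDegrees X (P₁, Q₁) ∧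
      m ≤ ((A.erase P₂).card, B.card) ∧ m.1 + m.2 = n :=
    ⟨_, _, hsep2, le_refl _, rfl⟩
  obtain ⟨m, hmS, hmle, hmn⟩ := Nat.find_spec hexist
  have hm : m ∈ degSet X (P₁, Q₁) := by
    refine ⟨hmS, ?_⟩
    intro e' he' hle'
    by_contra hne'
    obtain ⟨ha1, ha2⟩ := Prod.le_def.mp hle'
    have hne2 : e'.1 ≠ m.1 ∨ e'.2 ≠ m.2 := by
      by_contra hcc
      push_neg at hcc
      exact hne' (Prod.ext hcc.1 hcc.2)
    have hlt : e'.1 + e'.2 < Nat.find hexist := by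
      rw [← hmn]
      rcases hne2 with h | h <;> omega
    exact Nat.find_min hexist hlt ⟨e', he', le_trans hle' hmle, rfl⟩
  have hmne : m ≠ ((A.card, 0) : ℕ × ℕ) := by
    intro heq
    have h1 : m.1 ≤ (A.erase P₂).card := (Prod.le_def.mp hmle).1
    rw [Finset.card_erase_of_mem hP₂A] at h1
    rw [heq] at h1
    simp only at h1
    omega
  exact ⟨m, hm, (A.card, 0), hd, hmne⟩
end
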